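/- Let G be a profinite group and N a closed normal subgroup of G. If for every open normal subgroup M of G the canonical quotient map G/M → G/NM is a Frattini cover, then the quotient map G → G/N is a Frattini cover; equivalently, N ⊆ Φ(G). -/

import Mathlib

open Function

noncomputable section

/-- The Frattini subgroup of a topological group: the intersection of all maximal open
subgroups. -/
def frattiniOpen (G : Type*) [Group G] [TopologicalSpace G] : Subgroup G :=
  ⨅ M ∈ {M : Subgroup G | IsOpen (M : Set G) ∧ IsCoatom M}, M

/-- A Frattini cover: a continuous epimorphism whose kernel is contained in the Frattini
subgroup of the source. -/
def IsFrattiniCover {H G : Type*} [Group H] [TopologicalSpace H] [Group G] [TopologicalSpace G]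
    (φ : H →* G) : Prop :=
  Continuous φ ∧ Surjective φ ∧ φ.ker ≤ frattiniOpen H

/-- A universal Frattini cover: a Frattini cover through which every Frattini cover by a
profinite group factors via a continuous epimorphism. -/
def IsUniversalFrattiniCover {tG G : Type*} [Group tG] [TopologicalSpace tG] [Group G]
    [TopologicalSpace G] (φt : tG →* G) : Prop :=
  IsFrattiniCover φt ∧
    ∀ (H : Type) [Group H] [TopologicalSpace H] [IsTopologicalGroup H] [CompactSpace H]
      [T2Space H] [TotallyDisconnectedSpace H] (β : H →* G), IsFrattiniCover β →
        ∃ γ : tG →* H, Continuous γ ∧ Surjective γ ∧ β.comp γ = φt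

/-- A topological group is pro-`ℓ` if each of its continuous finite quotients is an
`ℓ`-group. -/
def IsProL (ℓ : ℕ) (H : Type*) [Group H] [TopologicalSpace H] : Prop :=
  ∀ (Q : Type) [Group Q] [Finite Q] (φ : H →* Q),
    Surjective φ → IsOpen (φ.ker : Set H) → IsPGroup ℓ Q

end

/-- Let `G` be a profinite group and `N` a closed normal subgroup of `G`.
If for every open normal subgroup `M` of `G` the canonical quotient map
`G/M → G/NM` is a Frattini cover, then the quotient map `G → G/N` is a Frattini cover;
equivalently, `N ⊆ Φ(G)`. -/
theorem statement_1 (G : Type) [Group G] [TopologicalSpace G] [IsTopologicalGroup G]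
    [CompactSpace G] [T2Space G] [TotallyDisconnectedSpace G]
    (N : Subgroup G) [hNn : N.Normal] (hNc : IsClosed (N : Set G))
    (h : ∀ (M : Subgroup G) [M.Normal], IsOpen (M : Set G) →
      letI : (N ⊔ M).Normal := Subgroup.sup_normal N M
      IsFrattiniCover (QuotientGroup.map M (N ⊔ M) (MonoidHom.id G)
        (by rw [Subgroup.comap_id]; exact le_sup_right))) :
    IsFrattiniCover (QuotientGroup.mk' N) ∧ N ≤ frattiniOpen G := by
  have key : N ≤ frattiniOpen G := by
    rw [frattiniOpen]
    refine le_iInf fun K => le_iInf fun hK => ?_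
    obtain ⟨hKopen, hKco⟩ := hK
    -- M := normal core of K, an open normal subgroup contained in K
    set M : Subgroup G := K.normalCore with hM
    have hMle : M ≤ K := K.normalCore_le
    have : Finite (G ⧸ K) := K.quotient_finite_of_isOpen hKopen
    have : K.FiniteIndex := K.finiteIndex_of_finite_quotient
    have hMopen : IsOpen (M : Set G) :=
      Subgroup.isOpen_of_isClosed_of_finiteIndex _
        (K.normalCore_isClosed (K.isClosed_of_isOpen hKopen))
    letI : (N ⊔ M).Normal := Subgroup.sup_normal N M
    obtain ⟨-, -, hker⟩ := h M hMopen
    -- the image K' of K in G/M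
    set π := QuotientGroup.mk' M with hπ
    set K' : Subgroup (G ⧸ M) := K.map π with hK'
    have hcomap : K'.comap π = K := by
      rw [hK', Subgroup.comap_map_eq, QuotientGroup.ker_mk']
      exact sup_eq_left.mpr hMle
    -- K' is open
    have hK'open : IsOpen (K' : Set (G ⧸ M)) := by
      have := QuotientGroup.isOpenMap_coe (N := M) _ hKopen
      rw [hK', Subgroup.coe_map]; exact this
    -- K' is a coatom
    have hπs : Surjective π := QuotientGroup.mk'_surjective M
    have hK'co : IsCoatom K' := by
      constructor
      · intro htop
        apply hKco.1
        rw [← hcomap, htop, Subgroup.comap_top]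
      · intro L' hlt
        have h1 : K ≤ L'.comap π := hcomap.ge.trans (Subgroup.comap_mono hlt.le)
        have h2 : K ≠ L'.comap π := by
          intro he
          apply hlt.ne
          exact (congrArg (Subgroup.map π) he).trans
            (Subgroup.map_comap_eq_self_of_surjective hπs L')
        have := hKco.2 (L'.comap π) (lt_of_le_of_ne h1 h2)
        rw [← Subgroup.map_comap_eq_self_of_surjective hπs L', this,
          Subgroup.map_top_of_surjective _ hπs]
    -- Frattini of G/M is contained in K'
    have hfrle : frattiniOpen (G ⧸ M) ≤ K' := by
      rw [frattiniOpen]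
      exact iInf_le_of_le K' (iInf_le_of_le ⟨hK'open, hK'co⟩ le_rfl)
    -- conclude
    intro n hn
    have hmem : π n ∈ (QuotientGroup.map M (N ⊔ M) (MonoidHom.id G)
        (by rw [Subgroup.comap_id]; exact le_sup_right)).ker := by
      rw [MonoidHom.mem_ker]
      show QuotientGroup.map M (N ⊔ M) (MonoidHom.id G) _ ((QuotientGroup.mk' M) n) = 1
      rw [QuotientGroup.map_mk']
      simpa [QuotientGroup.eq_one_iff] using Subgroup.mem_sup_left hn
    have : π n ∈ K' := hfrle (hker hmem)
    have : n ∈ K'.comap π := this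
    rwa [hcomap] at this
  refine ⟨⟨continuous_quotient_mk', QuotientGroup.mk'_surjective N, ?_⟩, key⟩
  rw [QuotientGroup.ker_mk']
  exact key
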